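/- The sum over k >= 1 of C_k^{(3)} equals 1/2, where C_k^{(3)} = 2^{-k} * integral from 0 to infinity of Gamma(-1/2,x)^k / [x^{-1/2} e^{-x} + gamma(1/2,x)]^k dx. -/

import Mathlib

open Set MeasureTheory

/-- Upper incomplete gamma function. -/
noncomputable def Gup (ν x : ℝ) : ℝ := ∫ t in Ioi x, Real.exp (-t) * t ^ (ν - 1)

/-- Lower incomplete gamma function. -/
noncomputable def glow (ν x : ℝ) : ℝ := ∫ t in Ioc (0 : ℝ) x, Real.exp (-t) * t ^ (ν - 1)

noncomputable def C3 (k : ℕ) : ℝ :=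
  (1 / 2 ^ k) * ∫ x in Ioi (0 : ℝ),
    (Gup (-(1 / 2)) x / (x ^ (-(1 / 2) : ℝ) * Real.exp (-x) + glow (1 / 2) x)) ^ k

namespace SumC3Aux

open Real

lemma int_Ioi_of_nonpos {p x : ℝ} (hp : p ≤ 0) (hx : 0 < x) :
    IntegrableOn (fun t => Real.exp (-t) * t ^ p) (Ioi x) := by
  apply Integrable.mono' (g := fun t => x ^ p * Real.exp (-t))
  · exact (Integrable.const_mul (by simpa using exp_neg_integrableOn_Ioi x one_pos : IntegrableOn (fun t => Real.exp (-t)) (Ioi x)) _)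
  · apply ContinuousOn.aestronglyMeasurable _ measurableSet_Ioi
    exact (Real.continuous_exp.comp continuous_neg).continuousOn.mul
      (fun t ht => (Real.continuousAt_rpow_const t p (Or.inl (hx.trans ht).ne')).continuousWithinAt)
  · filter_upwards [ae_restrict_mem measurableSet_Ioi] with t ht
    rw [Real.norm_eq_abs, abs_mul, abs_of_pos (Real.exp_pos _),
      abs_of_nonneg (Real.rpow_nonneg (hx.trans ht).le _), mul_comm]
    exact mul_le_mul_of_nonneg_right (Real.rpow_le_rpow_of_nonpos hx (le_of_lt ht) hp)
      (Real.exp_pos _).le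

lemma glow_nonneg (ν x : ℝ) : 0 ≤ glow ν x := by
  apply setIntegral_nonneg measurableSet_Ioc
  intro t ht
  exact mul_nonneg (Real.exp_pos _).le (Real.rpow_nonneg ht.1.le _)

lemma Gup_nonneg (ν : ℝ) {x : ℝ} (hx : 0 ≤ x) : 0 ≤ Gup ν x := by
  apply setIntegral_nonneg measurableSet_Ioi
  intro t ht
  exact mul_nonneg (Real.exp_pos _).le (Real.rpow_nonneg (hx.trans_lt ht).le _)

lemma glow_of_nonpos {ν x : ℝ} (hx : x ≤ 0) : glow ν x = 0 := by
  unfold glow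
  rw [Ioc_eq_empty (fun h => absurd (h.trans_le hx) (lt_irrefl 0))]
  simp

lemma glow_mono {ν : ℝ} (hν : 0 < ν) : Monotone (glow ν) := by
  intro x y hxy
  rcases le_or_gt x 0 with hx | hx
  · rw [glow_of_nonpos hx]; exact glow_nonneg ν y
  · apply setIntegral_mono_set
    · exact (Real.GammaIntegral_convergent hν).mono_set Ioc_subset_Ioi_self
    · filter_upwards [ae_restrict_mem measurableSet_Ioc] with t ht
      exact mul_nonneg (Real.exp_pos _).le (Real.rpow_nonneg ht.1.le _)
    · exact HasSubset.Subset.eventuallyLE (Ioc_subset_Ioc_right hxy)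

lemma glow_add_Gup {x : ℝ} (hx : 0 < x) :
    glow (1/2) x + Gup (1/2) x = Real.sqrt π := by
  unfold glow Gup
  rw [← Real.Gamma_one_half_eq, Real.Gamma_eq_integral (by norm_num),
    ← setIntegral_union (Ioc_disjoint_Ioi le_rfl) measurableSet_Ioi
      ((Real.GammaIntegral_convergent (by norm_num : (0:ℝ) < 1/2)).mono_set Ioc_subset_Ioi_self)
      ((Real.GammaIntegral_convergent (by norm_num : (0:ℝ) < 1/2)).mono_set
        (Ioi_subset_Ioi hx.le)),
    Ioc_union_Ioi_eq_Ioi hx.le]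

lemma glow_le (x : ℝ) : glow (1/2) x ≤ Real.sqrt π := by
  rcases le_or_gt x 0 with hx | hx
  · rw [glow_of_nonpos hx]; positivity
  · nlinarith [glow_add_Gup hx, Gup_nonneg (1/2) hx.le]

lemma key1 {x : ℝ} (hx : 0 < x) :
    Gup (-(1/2)) x = 2 * (x ^ (-(1/2) : ℝ) * Real.exp (-x)) - 2 * Gup (1/2) x := by
  have h1 : IntegrableOn (fun t => Real.exp (-t) * t ^ (-(1/2) - 1 : ℝ)) (Ioi x) :=
    int_Ioi_of_nonpos (by norm_num) hx
  have h2 : IntegrableOn (fun t => Real.exp (-t) * t ^ ((1/2 : ℝ) - 1)) (Ioi x) :=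
    int_Ioi_of_nonpos (by norm_num) hx
  have hderiv : ∀ t ∈ Ici x, HasDerivAt (fun t : ℝ => -2 * (t ^ (-(1/2) : ℝ) * Real.exp (-t)))
      (Real.exp (-t) * t ^ (-(1/2) - 1 : ℝ) + 2 * (Real.exp (-t) * t ^ ((1/2 : ℝ) - 1))) t := by
    intro t ht
    have ht0 : (0:ℝ) < t := hx.trans_le ht
    have H := (((hasDerivAt_rpow_const (x := t) (p := (-(1/2) : ℝ))
        (Or.inl ht0.ne'))).mul ((hasDerivAt_neg t).exp)).const_mul (-2 : ℝ)
    refine H.congr_deriv ?_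
    have e1 : ((1:ℝ)/2 - 1) = -(1/2) := by norm_num
    rw [e1]
    ring
  have htend : Filter.Tendsto (fun t : ℝ => -2 * (t ^ (-(1/2) : ℝ) * Real.exp (-t)))
      Filter.atTop (nhds 0) := by
    have := (tendsto_rpow_neg_atTop (by norm_num : (0:ℝ) < 1/2)).mul
      (Real.tendsto_exp_neg_atTop_nhds_zero)
    simpa using this.const_mul (-2 : ℝ)
  have key := integral_Ioi_of_hasDerivAt_of_tendsto' hderiv (h1.add (h2.const_mul 2)) htend
  rw [integral_add h1 (h2.const_mul 2), MeasureTheory.integral_const_mul] at key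
  have hG1 : (∫ t in Ioi x, Real.exp (-t) * t ^ (-(1/2) - 1 : ℝ)) = Gup (-(1/2)) x := rfl
  have hG2 : (∫ t in Ioi x, Real.exp (-t) * t ^ ((1/2 : ℝ) - 1)) = Gup (1/2) x := rfl
  rw [hG1, hG2] at key
  linarith [key]

lemma glow_hasDeriv {x : ℝ} (hx : 0 < x) :
    HasDerivAt (glow (1/2)) (Real.exp (-x) * x ^ ((1/2:ℝ) - 1)) x := by
  set f : ℝ → ℝ := fun t => Real.exp (-t) * t ^ ((1/2:ℝ) - 1) with hf
  have hmeas : Measurable f :=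
    (Real.measurable_exp.comp measurable_neg).mul
      (by measurability : Measurable fun t : ℝ => t ^ ((1/2:ℝ) - 1))
  have hii : IntervalIntegrable f volume 0 x := by
    rw [intervalIntegrable_iff_integrableOn_Ioc_of_le hx.le]
    exact (Real.GammaIntegral_convergent (by norm_num : (0:ℝ) < 1/2)).mono_set
      Ioc_subset_Ioi_self
  have hca : ContinuousAt f x :=
    ((Real.continuous_exp.comp continuous_neg).continuousAt).mul
      (Real.continuousAt_rpow_const x _ (Or.inl hx.ne'))
  have H := intervalIntegral.integral_hasDerivAt_right hii
    (hmeas.stronglyMeasurable.stronglyMeasurableAtFilter) hca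
  apply H.congr_of_eventuallyEq
  filter_upwards [Ioi_mem_nhds hx] with y hy
  rw [glow, intervalIntegral.integral_of_le (le_of_lt hy)]

/-- Measurable version of `Gup (1/2)`. -/
noncomputable def Gm (x : ℝ) : ℝ := Real.sqrt π - glow (1/2) x

lemma Gm_eq {x : ℝ} (hx : 0 < x) : Gm x = Gup (1/2) x := by
  have := glow_add_Gup hx; unfold Gm; linarith

lemma Gm_meas : Measurable Gm :=
  measurable_const.sub (glow_mono (by norm_num : (0:ℝ) < 1/2)).measurable

lemma Gm_nonneg (x : ℝ) : 0 ≤ Gm x := by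
  have := glow_le x; unfold Gm; linarith

lemma key2 {x : ℝ} (hx : 0 < x) :
    Gup (-(1/2)) x = 2 * (x ^ (-(1/2) : ℝ) * Real.exp (-x) - Gm x) := by
  rw [key1 hx, Gm_eq hx]; ring

lemma Gm_le {x : ℝ} (hx : 0 < x) : Gm x ≤ x ^ (-(1/2) : ℝ) * Real.exp (-x) := by
  have h := key2 hx
  have h2 := Gup_nonneg (-(1/2)) hx.le
  linarith

lemma Gm_int : IntegrableOn Gm (Ioi (0:ℝ)) := by
  apply Integrable.mono' (g := fun t => Real.exp (-t) * t ^ ((1/2:ℝ) - 1))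
  · exact Real.GammaIntegral_convergent (by norm_num)
  · exact Gm_meas.aestronglyMeasurable
  · filter_upwards [ae_restrict_mem measurableSet_Ioi] with t ht
    rw [Real.norm_eq_abs, abs_of_nonneg (Gm_nonneg t)]
    calc Gm t ≤ t ^ (-(1/2) : ℝ) * Real.exp (-t) := Gm_le ht
    _ = Real.exp (-t) * t ^ ((1/2:ℝ) - 1) := by
        rw [show ((1:ℝ)/2 - 1) = -(1/2) by norm_num]; ring

lemma exp_rpow_int : IntegrableOn (fun x : ℝ => x ^ (-(1/2) : ℝ) * Real.exp (-x)) (Ioi (0:ℝ)) := by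
  apply (Real.GammaIntegral_convergent (by norm_num : (0:ℝ) < 1/2)).congr_fun _ measurableSet_Ioi
  intro x _
  rw [show ((1:ℝ)/2 - 1) = -(1/2) by norm_num]; ring

lemma integral_exp_rpow :
    ∫ x in Ioi (0:ℝ), x ^ (-(1/2) : ℝ) * Real.exp (-x) = Real.sqrt π := by
  rw [← Real.Gamma_one_half_eq, Real.Gamma_eq_integral (by norm_num)]
  apply setIntegral_congr_fun measurableSet_Ioi
  intro x _
  rw [show ((1:ℝ)/2 - 1) = -(1/2) by norm_num]; ring

lemma integral_Gm : ∫ x in Ioi (0:ℝ), Gm x = Real.sqrt π / 2 := by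
  set F : ℝ → ℝ := fun x => x * Gm x with hF
  have hd : ∀ x ∈ Ioi (0:ℝ), HasDerivAt F (Gm x - Real.exp (-x) * x ^ ((3/2:ℝ) - 1)) x := by
    intro x hx
    have hx0 : (0:ℝ) < x := hx
    have hxx : x * x ^ (-(1/2) : ℝ) = x ^ ((1:ℝ)/2) := by
      have h := Real.rpow_add hx0 1 (-(1/2))
      rw [Real.rpow_one] at h
      norm_num at h ⊢
      rw [h]
    have H := (hasDerivAt_id x).mul ((glow_hasDeriv hx0).const_sub (Real.sqrt π))
    have : F = fun y => y * (Real.sqrt π - glow (1/2) y) := rfl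
    rw [this]
    refine H.congr_deriv ?_
    simp only [Gm, one_mul, id_eq]
    rw [show ((3:ℝ)/2 - 1) = 1/2 by norm_num, ← hxx,
      show ((1:ℝ)/2 - 1) = -(1/2) by norm_num]
    ring
  have hub : ∀ x : ℝ, 0 < x → F x ≤ x ^ ((1:ℝ)/2) * Real.exp (-x) := by
    intro x hx0
    have hxx : x * x ^ (-(1/2) : ℝ) = x ^ ((1:ℝ)/2) := by
      have h := Real.rpow_add hx0 1 (-(1/2))
      rw [Real.rpow_one] at h
      norm_num at h ⊢
      rw [h]
    calc F x ≤ x * (x ^ (-(1/2) : ℝ) * Real.exp (-x)) := by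
          exact mul_le_mul_of_nonneg_left (Gm_le hx0) hx0.le
    _ = x ^ ((1:ℝ)/2) * Real.exp (-x) := by rw [← hxx]; ring
  have hlb : ∀ x : ℝ, 0 ≤ x → 0 ≤ F x := fun x hx =>
    mul_nonneg hx (Gm_nonneg x)
  have hcont : ContinuousWithinAt F (Ici (0:ℝ)) 0 := by
    have hF0 : F 0 = 0 := by simp [hF]
    unfold ContinuousWithinAt
    rw [hF0]
    apply tendsto_of_tendsto_of_tendsto_of_le_of_le' (g := fun _ : ℝ => (0:ℝ))
      (h := fun x : ℝ => x * Real.sqrt π)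
    · exact tendsto_const_nhds
    · have : Filter.Tendsto (fun x : ℝ => x * Real.sqrt π) (nhds 0) (nhds (0 * Real.sqrt π)) :=
        (continuous_id.mul continuous_const).tendsto 0
      rw [zero_mul] at this
      exact this.mono_left nhdsWithin_le_nhds
    · filter_upwards [self_mem_nhdsWithin] with x hx
      exact hlb x hx
    · filter_upwards [self_mem_nhdsWithin] with x hx
      have h2 : Gm x ≤ Real.sqrt π := by
        have := glow_nonneg (1/2) x; unfold Gm; linarith
      exact mul_le_mul_of_nonneg_left h2 hx
  have htend : Filter.Tendsto F Filter.atTop (nhds 0) := by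
    apply tendsto_of_tendsto_of_tendsto_of_le_of_le' (g := fun _ : ℝ => (0:ℝ))
      (h := fun x : ℝ => x ^ ((1:ℝ)/2) * Real.exp (-x))
    · exact tendsto_const_nhds
    · have := tendsto_rpow_mul_exp_neg_mul_atTop_nhds_zero ((1:ℝ)/2) 1 one_pos
      simpa using this
    · filter_upwards [Filter.eventually_ge_atTop (0:ℝ)] with x hx
      exact hlb x hx
    · filter_upwards [Filter.eventually_gt_atTop (0:ℝ)] with x hx
      exact hub x hx
  have f'int : IntegrableOn (fun x => Gm x - Real.exp (-x) * x ^ ((3/2:ℝ) - 1)) (Ioi (0:ℝ)) :=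
    Gm_int.sub (Real.GammaIntegral_convergent (by norm_num : (0:ℝ) < 3/2))
  have key := integral_Ioi_of_hasDerivAt_of_tendsto hcont hd f'int htend
  have hF0 : F 0 = 0 := by simp [hF]
  rw [hF0, sub_zero] at key
  rw [integral_sub Gm_int (Real.GammaIntegral_convergent (by norm_num : (0:ℝ) < 3/2))] at key
  have hGamma : (∫ x in Ioi (0:ℝ), Real.exp (-x) * x ^ ((3/2:ℝ) - 1)) = Real.sqrt π / 2 := by
    rw [← Real.Gamma_eq_integral (by norm_num : (0:ℝ) < 3/2),
      show ((3:ℝ)/2) = 1/2 + 1 by norm_num,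
      Real.Gamma_add_one (by norm_num : (1:ℝ)/2 ≠ 0), Real.Gamma_one_half_eq]
    ring
  rw [hGamma] at key
  linarith


noncomputable def D (x : ℝ) : ℝ := x ^ (-(1/2) : ℝ) * Real.exp (-x) + glow (1/2) x

noncomputable def q (x : ℝ) : ℝ := (D x - Real.sqrt π) / D x

noncomputable def g (x : ℝ) : ℝ := (x ^ (-(1/2) : ℝ) * Real.exp (-x) - Gm x) / Real.sqrt π

lemma D_pos {x : ℝ} (hx : 0 < x) : 0 < D x :=
  add_pos_of_pos_of_nonneg (by positivity) (glow_nonneg _ _)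

lemma D_sub (x : ℝ) : D x - Real.sqrt π = x ^ (-(1/2) : ℝ) * Real.exp (-x) - Gm x := by
  unfold D Gm; ring

lemma D_meas : Measurable D :=
  ((by measurability : Measurable fun x : ℝ => x ^ (-(1/2) : ℝ)).mul
    (Real.measurable_exp.comp measurable_neg)).add
    (glow_mono (by norm_num : (0:ℝ) < 1/2)).measurable

lemma q_meas : Measurable q := (D_meas.sub measurable_const).div D_meas

lemma q_nonneg {x : ℝ} (hx : 0 < x) : 0 ≤ q x := by
  apply div_nonneg _ (D_pos hx).le
  rw [D_sub]
  have := Gm_le hx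
  linarith

lemma q_lt_one {x : ℝ} (hx : 0 < x) : q x < 1 := by
  rw [q, div_lt_one (D_pos hx)]
  have : 0 < Real.sqrt π := Real.sqrt_pos.mpr Real.pi_pos
  linarith

lemma sqrtpi_pos : (0:ℝ) < Real.sqrt π := Real.sqrt_pos.mpr Real.pi_pos

lemma g_eq {x : ℝ} (hx : 0 < x) : q x / (1 - q x) = g x := by
  have hD := D_pos hx
  have h1q : 1 - q x = Real.sqrt π / D x := by
    unfold q; field_simp; ring
  rw [h1q, q, g, ← D_sub]
  rw [div_div_div_eq, mul_comm (D x) (Real.sqrt π), mul_div_mul_right _ _ hD.ne']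

lemma g_nonneg {x : ℝ} (hx : 0 < x) : 0 ≤ g x := by
  apply div_nonneg _ sqrtpi_pos.le
  have := Gm_le hx; linarith

lemma g_int : IntegrableOn g (Ioi (0:ℝ)) := (exp_rpow_int.sub Gm_int).div_const _

lemma g_integral : ∫ x in Ioi (0:ℝ), g x = 1/2 := by
  unfold g
  rw [integral_div, integral_sub exp_rpow_int Gm_int, integral_exp_rpow, integral_Gm]
  field_simp
  ring

lemma hq_div {x : ℝ} (hx : 0 < x) :
    Gup (-(1/2)) x / (x ^ (-(1/2) : ℝ) * Real.exp (-x) + glow (1/2) x) = 2 * q x := by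
  have : (x ^ (-(1/2) : ℝ) * Real.exp (-x) + glow (1/2) x) = D x := rfl
  rw [this, key2 hx, ← D_sub, q, mul_div_assoc]

lemma C3_eq (k : ℕ) : C3 (k+1) = ∫ x in Ioi (0:ℝ), q x ^ (k+1) := by
  unfold C3
  rw [← MeasureTheory.integral_const_mul]
  apply setIntegral_congr_fun measurableSet_Ioi
  intro x hx
  have hx0 : (0:ℝ) < x := hx
  dsimp only
  rw [hq_div hx0, mul_pow]
  have h2 : ((2:ℝ) ^ (k+1)) ≠ 0 := by positivity
  field_simp

lemma tsum_pow_eq {x : ℝ} (hx : 0 < x) : ∑' k : ℕ, q x ^ (k+1) = g x := by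
  have h0 := q_nonneg hx
  have h1 := q_lt_one hx
  calc ∑' k : ℕ, q x ^ (k+1) = ∑' k : ℕ, q x * q x ^ k := by
        apply tsum_congr; intro k; rw [pow_succ']
  _ = q x * ∑' k : ℕ, q x ^ k := tsum_mul_left
  _ = q x * (1 - q x)⁻¹ := by rw [tsum_geometric_of_lt_one h0 h1]
  _ = q x / (1 - q x) := (div_eq_mul_inv _ _).symm
  _ = g x := g_eq hx

lemma lintegral_fin :
    ∑' k : ℕ, ∫⁻ x, ‖q x ^ (k+1)‖₊ ∂(volume.restrict (Ioi (0:ℝ))) ≠ ⊤ := by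
  have h1 : ∀ k : ℕ, (∫⁻ x, ‖q x ^ (k+1)‖₊ ∂(volume.restrict (Ioi (0:ℝ)))) =
      ∫⁻ x, (ENNReal.ofReal (q x)) ^ (k+1) ∂(volume.restrict (Ioi (0:ℝ))) := by
    intro k
    apply lintegral_congr_ae
    filter_upwards [ae_restrict_mem measurableSet_Ioi] with x hx
    rw [← ENNReal.ofReal_pow (q_nonneg hx), ← Real.enorm_eq_ofReal
      (pow_nonneg (q_nonneg hx) _)]
    rfl
  simp_rw [h1]
  rw [← lintegral_tsum (fun k => ((q_meas.ennreal_ofReal).pow_const _).aemeasurable)]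
  have h2 : (∫⁻ x, ∑' k : ℕ, (ENNReal.ofReal (q x)) ^ (k+1)
      ∂(volume.restrict (Ioi (0:ℝ)))) = ∫⁻ x, ENNReal.ofReal (g x)
      ∂(volume.restrict (Ioi (0:ℝ))) := by
    apply lintegral_congr_ae
    filter_upwards [ae_restrict_mem measurableSet_Ioi] with x hx
    have h0 := q_nonneg hx
    have hlt := q_lt_one hx
    calc (∑' k : ℕ, (ENNReal.ofReal (q x)) ^ (k+1))
        = ENNReal.ofReal (q x) * ∑' k : ℕ, (ENNReal.ofReal (q x)) ^ k := by
          rw [← ENNReal.tsum_mul_left]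
          exact tsum_congr fun k => by rw [pow_succ']
      _ = ENNReal.ofReal (q x) * (1 - ENNReal.ofReal (q x))⁻¹ := by
          rw [ENNReal.tsum_geometric]
      _ = ENNReal.ofReal (q x) * (ENNReal.ofReal (1 - q x))⁻¹ := by
          rw [ENNReal.ofReal_sub _ h0, ENNReal.ofReal_one]
      _ = ENNReal.ofReal (q x / (1 - q x)) := by
          rw [ENNReal.ofReal_div_of_pos (by linarith : (0:ℝ) < 1 - q x), div_eq_mul_inv]
      _ = ENNReal.ofReal (g x) := by rw [g_eq hx]
  rw [h2, ← ofReal_integral_eq_lintegral_ofReal g_int]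
  · exact ENNReal.ofReal_ne_top
  · filter_upwards [ae_restrict_mem measurableSet_Ioi] with x hx
    exact g_nonneg hx

end SumC3Aux

theorem sum_C3 : ∑' k : ℕ, C3 (k + 1) = 1 / 2 := by
  rw [show (∑' k : ℕ, C3 (k+1)) = ∑' k : ℕ, ∫ x in Ioi (0:ℝ), SumC3Aux.q x ^ (k+1) from
    tsum_congr fun k => SumC3Aux.C3_eq k]
  rw [← MeasureTheory.integral_tsum
    (fun k => ((SumC3Aux.q_meas.pow_const _).aestronglyMeasurable)) SumC3Aux.lintegral_fin]
  rw [setIntegral_congr_fun measurableSet_Ioi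
    (fun x hx => SumC3Aux.tsum_pow_eq (show (0:ℝ) < x from hx))]
  exact SumC3Aux.g_integral
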